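/- Let G be a connected r-regular simple graph with n vertices and m edges, and let L_RT denote the Laplacian matrix of RT(G) written in block form. Then for every real number μ with μ ≠ 1, μ ≠ 2 and μ ≠ 3, det(μ·I_{m+3n} − L_RT) = (μ−1)^n · (μ−2)^(m−n) · (μ−3)^(2n) · det( y·I_n − L(G) ), where y = (μ−2)²/(μ−3) − rμ/(μ−3) − 2(μ−2)/((μ−1)(μ−3)) and L(G) is the Laplacian matrix of G. -/

import Mathlib

open Matrix SimpleGraph

set_option maxHeartbeats 1000000

/-- The Laplacian matrix of `RT(G)` in block form, given the vertex–edge incidence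
matrix `B` of an `r`-regular graph `G` and its Laplacian matrix `L`.  The index type is
(edge-vertices of `G`) ⊕ (original vertices of `G`) ⊕ (pairs of new vertices). -/
def LRTMatrix {n m : ℕ} (r : ℕ) (B : Matrix (Fin n) (Fin m) ℝ)
    (L : Matrix (Fin n) (Fin n) ℝ) :
    Matrix (Fin m ⊕ Fin n ⊕ Fin n × Fin 2) (Fin m ⊕ Fin n ⊕ Fin n × Fin 2) ℝ :=
  fun i j =>
    match i, j with
    | Sum.inl a, Sum.inl b => if a = b then 2 else 0
    | Sum.inl a, Sum.inr (Sum.inl v) => -(B v a)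
    | Sum.inl _, Sum.inr (Sum.inr _) => 0
    | Sum.inr (Sum.inl v), Sum.inl a => -(B v a)
    | Sum.inr (Sum.inl v), Sum.inr (Sum.inl w) => L v w + (if v = w then (r : ℝ) + 2 else 0)
    | Sum.inr (Sum.inl v), Sum.inr (Sum.inr (w, _)) => if v = w then -1 else 0
    | Sum.inr (Sum.inr _), Sum.inl _ => 0
    | Sum.inr (Sum.inr (w, _)), Sum.inr (Sum.inl v) => if w = v then -1 else 0
    | Sum.inr (Sum.inr (w, k)), Sum.inr (Sum.inr (w', k')) =>
        if w = w' then (if k = k' then 2 else -1) else 0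

/-- the coupling block between original vertices and new-vertex pairs -/
def Cmat (n : ℕ) : Matrix (Fin n) (Fin n × Fin 2) ℝ :=
  fun v p => if v = p.1 then 1 else 0

/-- the block of the characteristic matrix on the new-vertex pairs -/
def Dmat (n : ℕ) (μ : ℝ) : Matrix (Fin n × Fin 2) (Fin n × Fin 2) ℝ :=
  fun p q => if p.1 = q.1 then (if p.2 = q.2 then μ - 2 else 1) else 0

lemma BBt {n m : ℕ} (r : ℕ) (G : SimpleGraph (Fin n)) [DecidableRel G.Adj]
    (hreg : G.IsRegularOfDegree r)
    (φ : Fin m ≃ G.edgeSet) (B : Matrix (Fin n) (Fin m) ℝ)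
    (hB : ∀ (v : Fin n) (j : Fin m), B v j = if v ∈ (φ j : Sym2 (Fin n)) then 1 else 0) :
    B * Bᵀ = (2 * r : ℝ) • 1 - G.lapMatrix ℝ := by
  ext v w
  rw [mul_apply]
  have key : ∀ a : Fin m, B v a * Bᵀ a w
      = if (v ∈ (φ a : Sym2 (Fin n)) ∧ w ∈ (φ a : Sym2 (Fin n))) then (1:ℝ) else 0 := by
    intro a
    rw [transpose_apply, hB, hB, ite_and]
    split_ifs <;> ring
  simp_rw [key]
  rw [Fintype.sum_equiv φ _ (fun e => if (v ∈ (e : Sym2 (Fin n)) ∧ w ∈ (e : Sym2 (Fin n))) then (1:ℝ) else 0) (fun a => rfl)]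
  rw [Finset.sum_set_coe (f := fun e => if (v ∈ (e : Sym2 (Fin n)) ∧ w ∈ (e : Sym2 (Fin n))) then (1:ℝ) else 0)]
  rw [show G.edgeSet.toFinset = G.edgeFinset from rfl]
  by_cases hvw : v = w
  · subst hvw
    simp only [and_self]
    rw [Finset.sum_boole]
    rw [show ({e ∈ G.edgeFinset | v ∈ e} : Finset _) = G.incidenceFinset v from (G.incidenceFinset_eq_filter v).symm]
    rw [G.card_incidenceFinset_eq_degree, hreg v]
    simp [lapMatrix, degMatrix, hreg v, one_apply]
    ring
  · have hiff : ∀ e : Sym2 (Fin n), (v ∈ e ∧ w ∈ e) ↔ e = s(v, w) := fun e => Sym2.mem_and_mem_iff hvw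
    simp_rw [hiff]
    rw [Finset.sum_ite_eq' G.edgeFinset (s(v,w)) (fun _ => (1:ℝ))]
    simp [mem_edgeFinset, lapMatrix, degMatrix, one_apply, hvw, adjMatrix]

lemma Mdecomp {n m : ℕ} (r : ℕ) (B : Matrix (Fin n) (Fin m) ℝ)
    (L : Matrix (Fin n) (Fin n) ℝ) (μ : ℝ) :
    μ • (1 : Matrix (Fin m ⊕ Fin n ⊕ Fin n × Fin 2) (Fin m ⊕ Fin n ⊕ Fin n × Fin 2) ℝ)
        - LRTMatrix r B L
      = fromBlocks ((μ - 2) • 1) (fromCols Bᵀ 0) (fromRows B 0)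
          (fromBlocks ((μ - ((r:ℝ) + 2)) • 1 - L) (Cmat n) (Cmat n)ᵀ (Dmat n μ)) := by
  ext i j
  have hsimp := fun (i j) => (Matrix.sub_apply (μ • (1 : Matrix (Fin m ⊕ Fin n ⊕ Fin n × Fin 2) (Fin m ⊕ Fin n ⊕ Fin n × Fin 2) ℝ)) (LRTMatrix r B L) i j)
  rcases i with a | v | ⟨w, k⟩ <;> rcases j with b | v' | ⟨w', k'⟩ <;>
    simp only [Matrix.sub_apply, Matrix.smul_apply, one_apply, smul_eq_mul, LRTMatrix,
      fromBlocks_apply₁₁, fromBlocks_apply₁₂, fromBlocks_apply₂₁, fromBlocks_apply₂₂,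
      fromRows_apply_inl, fromRows_apply_inr, fromCols_apply_inl, fromCols_apply_inr,
      transpose_apply, Cmat, Dmat, Sum.inl.injEq, Sum.inr.injEq, Prod.mk.injEq,
      reduceCtorEq, if_false, if_true, Matrix.zero_apply]
  · split_ifs <;> ring
  · ring
  · ring
  · ring
  · split_ifs <;> ring
  · split_ifs <;> ring
  · ring
  · rcases eq_or_ne w v' with h | h
    · simp [h]
    · simp [h, Ne.symm h]
  · by_cases hw : w = w' <;> by_cases hk : k = k' <;> simp [hw, hk] <;> split_ifs <;> ring

lemma Dsub (n : ℕ) (μ : ℝ) :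
    Dmat n μ = (blockDiagonal fun _ : Fin n => (!![μ-2, 1; 1, μ-2] : Matrix (Fin 2) (Fin 2) ℝ)).submatrix
      (Equiv.prodComm (Fin n) (Fin 2)) (Equiv.prodComm (Fin n) (Fin 2)) := by
  ext ⟨w, k⟩ ⟨w', k'⟩
  simp only [Dmat, submatrix_apply, Equiv.prodComm_apply, Prod.swap_prod_mk,
    blockDiagonal_apply]
  by_cases hw : w = w'
  · simp only [hw, if_true]
    fin_cases k <;> fin_cases k' <;> simp
  · simp [hw]

theorem laplacian_polynomial_RT_laplacian_form {n m : ℕ} (r : ℕ)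
    (G : SimpleGraph (Fin n)) [DecidableRel G.Adj]
    (hconn : G.Connected) (hreg : G.IsRegularOfDegree r)
    (φ : Fin m ≃ G.edgeSet) (B : Matrix (Fin n) (Fin m) ℝ)
    (hB : ∀ (v : Fin n) (j : Fin m), B v j = if v ∈ (φ j : Sym2 (Fin n)) then 1 else 0)
    (μ : ℝ) (h1 : μ ≠ 1) (h2 : μ ≠ 2) (h3 : μ ≠ 3) :
    (μ • (1 : Matrix (Fin m ⊕ Fin n ⊕ Fin n × Fin 2) (Fin m ⊕ Fin n ⊕ Fin n × Fin 2) ℝ)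
        - LRTMatrix r B (G.lapMatrix ℝ)).det
      = (μ - 1) ^ n * (μ - 2) ^ ((m : ℤ) - (n : ℤ)) * (μ - 3) ^ (2 * n) *
        ((((μ - 2) ^ 2 / (μ - 3) - (r : ℝ) * μ / (μ - 3)
              - 2 * (μ - 2) / ((μ - 1) * (μ - 3)))
            • (1 : Matrix (Fin n) (Fin n) ℝ)) - G.lapMatrix ℝ).det := by
  have h1' : μ - 1 ≠ 0 := sub_ne_zero.mpr h1
  have h2' : μ - 2 ≠ 0 := sub_ne_zero.mpr h2
  have h3' : μ - 3 ≠ 0 := sub_ne_zero.mpr h3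
  have hd : (μ - 1) * (μ - 3) ≠ 0 := mul_ne_zero h1' h3'
  set L : Matrix (Fin n) (Fin n) ℝ := G.lapMatrix ℝ with hL
  set y : ℝ := (μ - 2) ^ 2 / (μ - 3) - (r : ℝ) * μ / (μ - 3)
              - 2 * (μ - 2) / ((μ - 1) * (μ - 3)) with hy
  set K' : Matrix (Fin 2) (Fin 2) ℝ :=
    ((μ-1)*(μ-3))⁻¹ • !![μ-2, -1; -1, μ-2] with hK'
  set E : Matrix (Fin n × Fin 2) (Fin n × Fin 2) ℝ :=
    (blockDiagonal fun _ : Fin n => K').submatrix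
      (Equiv.prodComm (Fin n) (Fin 2)) (Equiv.prodComm (Fin n) (Fin 2)) with hE
  have hKK' : (!![μ-2, 1; 1, μ-2] : Matrix (Fin 2) (Fin 2) ℝ) * K' = 1 := by
    rw [hK', Matrix.mul_smul]
    ext i j
    fin_cases i <;> fin_cases j <;>
      simp [mul_apply, Fin.sum_univ_two, one_apply] <;> field_simp <;> ring
  have hK'K : K' * (!![μ-2, 1; 1, μ-2] : Matrix (Fin 2) (Fin 2) ℝ) = 1 := by
    rw [hK', Matrix.smul_mul]
    ext i j
    fin_cases i <;> fin_cases j <;>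
      simp [mul_apply, Fin.sum_univ_two, one_apply] <;> field_simp <;> ring
  have hDE : Dmat n μ * E = 1 := by
    rw [Dsub, hE, submatrix_mul_equiv, ← blockDiagonal_mul]
    simp only [hKK']
    rw [show (blockDiagonal fun _ : Fin n => (1 : Matrix (Fin 2) (Fin 2) ℝ)) = 1 from
      blockDiagonal_one, submatrix_one_equiv]
  -- invertibility of the (1,1) block
  have hprod : ((μ - 2) • (1 : Matrix (Fin m) (Fin m) ℝ)) * ((μ - 2)⁻¹ • 1) = 1 := by
    rw [smul_mul_assoc, mul_smul_comm, one_mul, smul_smul, mul_inv_cancel₀ h2', one_smul]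
  haveI : Invertible ((μ - 2) • (1 : Matrix (Fin m) (Fin m) ℝ)) :=
    invertibleOfRightInverse _ _ hprod
  have hAinv : ⅟((μ - 2) • (1 : Matrix (Fin m) (Fin m) ℝ)) = (μ - 2)⁻¹ • 1 :=
    invOf_eq_right_inv hprod
  haveI : Invertible (Dmat n μ) := invertibleOfRightInverse _ _ hDE
  have hDinv : ⅟(Dmat n μ) = E := invOf_eq_right_inv hDE
  rw [Mdecomp, det_fromBlocks₁₁, hAinv]
  -- first Schur complement
  have hBBt : B * Bᵀ = (2 * (r:ℝ)) • 1 - L := BBt r G hreg φ B hB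
  set Q : Matrix (Fin n) (Fin n) ℝ :=
    ((μ - ((r:ℝ) + 2)) • 1 - L) - (μ - 2)⁻¹ • ((2 * (r:ℝ)) • 1 - L) with hQ
  have hS1 : fromBlocks ((μ - ((r:ℝ) + 2)) • 1 - L) (Cmat n) (Cmat n)ᵀ (Dmat n μ)
        - fromRows B 0 * ((μ - 2)⁻¹ • (1 : Matrix (Fin m) (Fin m) ℝ)) * fromCols Bᵀ 0
      = fromBlocks Q (Cmat n) (Cmat n)ᵀ (Dmat n μ) := by
    rw [Matrix.mul_smul, Matrix.mul_one, Matrix.smul_mul, fromRows_mul_fromCols,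
      Matrix.mul_zero, Matrix.zero_mul, Matrix.zero_mul, hBBt]
    ext i j
    rcases i with v | p <;> rcases j with v' | q <;>
      simp [fromBlocks, hQ]
  rw [hS1, det_fromBlocks₂₂, hDinv]
  -- the correction C * E * Cᵀ
  have hCEC : Cmat n * E * (Cmat n)ᵀ = (2 / (μ - 1)) • (1 : Matrix (Fin n) (Fin n) ℝ) := by
    ext v v'
    rw [mul_apply]
    have hq : ∀ q : Fin n × Fin 2, (Cmat n * E) v q * (Cmat n)ᵀ q v'
        = ∑ p : Fin n × Fin 2, Cmat n v p * E p q * Cmat n v' q := by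
      intro q
      rw [mul_apply, Finset.sum_mul, transpose_apply]
    simp_rw [hq]
    rw [Finset.sum_comm]
    simp only [Cmat, hE, submatrix_apply, Equiv.prodComm_apply, Prod.swap_prod_mk,
      blockDiagonal_apply, hK']
    rw [Fintype.sum_prod_type]
    simp only [ite_mul, mul_ite, one_mul, zero_mul, mul_zero, mul_one]
    simp [Finset.sum_ite_eq, Fintype.sum_prod_type, Fin.sum_univ_two, one_apply]
    split_ifs with h
    · subst h; field_simp; ring
    · simp [Ne.symm h]
  rw [hCEC]
  -- final Schur complement is a scalar multiple of y•1 - L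
  have hfinal : Q - (2 / (μ - 1)) • (1 : Matrix (Fin n) (Fin n) ℝ)
      = ((μ - 3) / (μ - 2)) • (y • 1 - L) := by
    ext v w
    simp only [hQ, Matrix.sub_apply, Matrix.smul_apply, smul_eq_mul, hy, one_apply]
    split_ifs <;> field_simp <;> ring
  rw [hfinal]
  -- compute all the determinants
  have hdetA : ((μ - 2) • (1 : Matrix (Fin m) (Fin m) ℝ)).det = (μ - 2) ^ m := by
    rw [Matrix.det_smul, det_one, mul_one, Fintype.card_fin]
  have hdetD : (Dmat n μ).det = ((μ - 1) * (μ - 3)) ^ n := by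
    rw [Dsub, det_submatrix_equiv_self, det_blockDiagonal]
    simp [det_fin_two_of]
    congr 1
    ring
  rw [hdetA, hdetD, Matrix.det_smul, Fintype.card_fin]
  rw [show ((m:ℤ) - (n:ℤ)) = (m:ℤ) + (-(n:ℤ)) by ring, zpow_add₀ h2', zpow_natCast,
    _root_.zpow_neg, zpow_natCast]
  have hpn : ((μ-2):ℝ) ^ n ≠ 0 := pow_ne_zero _ h2'
  generalize (y • (1 : Matrix (Fin n) (Fin n) ℝ) - L).det = Δ
  rw [mul_pow, div_pow, show 2 * n = n + n from two_mul n, pow_add]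
  field_simp
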